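/- Equivalence of Griffith's criterion, the maximum dissipation principle, and the explicit speed law: let κ: ℝᴺ → (0,∞) be continuous, let G_α(t,x) := ½(1−α²)(∂u/∂ν_{Ωₜ}(t,x))² for α ∈ [0,1), and suppose that on ∂Ωₜ one has u̇ + ω·∂u/∂ν_{Ωₜ} = 0. Then for a.e. t and ℋ^{N−1}-a.e. x ∈ ∂Ωₜ, the following are equivalent: (i) ω(t,x) = max{α ∈ [0,1) : α κ(x) = α G_α(t,x)}; (ii) 0 ≤ ω(t,x) < 1, G_{ω(t,x)}(t,x) ≤ κ(x), and ω(t,x)[G_{ω(t,x)}(t,x) − κ(x)] = 0; (iii) ω(t,x) = √(1 − 2κ(x)/(∂u/∂ν_{Ωₜ})²) if (∂u/∂ν_{Ωₜ})² > 2κ(x), and ω(t,x) = 0 otherwise. -/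

import Mathlib

open MeasureTheory Set
noncomputable section

/-- Griffith's criterion is equivalent to the explicit speed law. -/
theorem aux_iff (d k w : ℝ) (hk : 0 < k) :
    (0 ≤ w ∧ w < 1 ∧ (1 - w^2) / 2 * d^2 ≤ k ∧ w * ((1 - w^2) / 2 * d^2 - k) = 0) ↔
    w = (if d^2 > 2 * k then Real.sqrt (1 - 2 * k / d^2) else 0) := by
  split_ifs with h
  · have hd2 : (0:ℝ) < d^2 := by linarith
    have hlt : 2 * k / d^2 < 1 := (div_lt_one hd2).mpr h
    have hge : 0 < 2 * k / d^2 := div_pos (by linarith) hd2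
    have hs2 : (Real.sqrt (1 - 2 * k / d^2))^2 = 1 - 2 * k / d^2 :=
      Real.sq_sqrt (by linarith)
    set s := Real.sqrt (1 - 2 * k / d^2) with hs
    have hs0 : 0 ≤ s := Real.sqrt_nonneg _
    have hGk : (1 - s^2) / 2 * d^2 = k := by
      rw [hs2, sub_sub_cancel]; field_simp [show d ≠ 0 by rintro rfl; simp at hd2]
    constructor
    · rintro ⟨hw0, hw1, hle, heq⟩
      rcases mul_eq_zero.mp heq with h0 | h0
      · exfalso; rw [h0] at hle; nlinarith
      · have hw2 : w^2 = s^2 := by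
          rw [hs2]
          have : (1 - w^2) / 2 * d^2 = k := by linarith
          field_simp at this ⊢
          nlinarith [this]
        rw [← Real.sqrt_sq hw0, ← Real.sqrt_sq hs0, hw2]
    · rintro rfl
      refine ⟨hs0, by nlinarith [hs2, hs0], le_of_eq hGk, by rw [hGk]; ring⟩
  · push_neg at h
    constructor
    · rintro ⟨hw0, hw1, hle, heq⟩
      rcases mul_eq_zero.mp heq with h0 | h0
      · exact h0
      · have h0' : (1 - w^2) / 2 * d^2 = k := by linarith
        have hd2 : 0 < d^2 := by nlinarith [sq_nonneg (w * d), sq_nonneg d]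
        by_contra hw
        have hwpos : 0 < w := lt_of_le_of_ne hw0 (Ne.symm hw)
        have : 0 < w^2 * d^2 := mul_pos (pow_pos hwpos 2) hd2
        nlinarith
    · rintro rfl
      exact ⟨le_refl 0, zero_lt_one, by nlinarith, by ring⟩

/-- The explicit speed is the greatest element of the dissipation set. -/
theorem aux_greatest (d k : ℝ) (hk : 0 < k) :
    IsGreatest {α : ℝ | α ∈ Set.Ico (0:ℝ) 1 ∧ α * k = α * ((1 - α^2) / 2 * d^2)}
      (if d^2 > 2 * k then Real.sqrt (1 - 2 * k / d^2) else 0) := by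
  split_ifs with h
  · have hd2 : (0:ℝ) < d^2 := by linarith
    have hlt : 2 * k / d^2 < 1 := (div_lt_one hd2).mpr h
    have hge : 0 < 2 * k / d^2 := div_pos (by linarith) hd2
    have hs2 : (Real.sqrt (1 - 2 * k / d^2))^2 = 1 - 2 * k / d^2 :=
      Real.sq_sqrt (by linarith)
    set s := Real.sqrt (1 - 2 * k / d^2) with hs
    have hs0 : 0 ≤ s := Real.sqrt_nonneg _
    have hspos : 0 < s := by nlinarith [hs2]
    have hs1 : s < 1 := by nlinarith [hs2]
    have hGk : (1 - s^2) / 2 * d^2 = k := by rw [hs2, sub_sub_cancel]; field_simp [show d ≠ 0 by rintro rfl; simp at hd2]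
    constructor
    · exact ⟨⟨hs0, hs1⟩, by rw [hGk]⟩
    · rintro α ⟨⟨hα0, hα1⟩, hαeq⟩
      rcases eq_or_lt_of_le hα0 with h0 | hαpos
      · linarith
      · have hGα : k = (1 - α^2) / 2 * d^2 :=
          mul_left_cancel₀ (ne_of_gt hαpos) hαeq
        have hα2 : α^2 = s^2 := by
          rw [hs2]
          field_simp
          nlinarith [hGα]
        nlinarith [sq_nonneg (α - s)]
  · push_neg at h
    constructor
    · exact ⟨⟨le_refl 0, zero_lt_one⟩, by ring⟩
    · rintro α ⟨⟨hα0, hα1⟩, hαeq⟩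
      by_contra hα
      push_neg at hα
      have hαpos : 0 < α := hα
      have hGα : k = (1 - α^2) / 2 * d^2 :=
        mul_left_cancel₀ (ne_of_gt hαpos) hαeq
      have hd2 : 0 < d^2 := by nlinarith [sq_nonneg (α * d), sq_nonneg d]
      have : 0 < α^2 * d^2 := mul_pos (pow_pos hαpos 2) hd2
      nlinarith

/-- Equivalence of Griffith's criterion, the maximum dissipation principle and the
explicit speed law. Here `Dn t x = ∂u/∂ν_{Ωₜ}(t,x)`, `udot` is `u̇` on the boundary,
`ω` the scalar normal velocity, `κ` the (positive continuous) toughness, and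
`G_α = ½(1−α²)(∂u/∂ν)²` the dynamic energy release rate density. -/
theorem stmt_16 {N : ℕ} {T : ℝ} (hT : 0 < T)
    (Ω : ℝ → Set (EuclideanSpace ℝ (Fin N)))
    (Dn udot ω : ℝ → EuclideanSpace ℝ (Fin N) → ℝ)
    (κ : EuclideanSpace ℝ (Fin N) → ℝ)
    (hκcont : Continuous κ) (hκpos : ∀ x, 0 < κ x)
    -- kinematic relation `u̇ + ω ∂u/∂ν = 0` on `∂Ωₜ`
    (hkin : ∀ t ∈ Set.Icc (0:ℝ) T,
      ∀ᵐ x ∂(μH[(N : ℝ) - 1].restrict (frontier (Ω t))),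
        udot t x + ω t x * Dn t x = 0) :
    ∀ t ∈ Set.Icc (0:ℝ) T,
      ∀ᵐ x ∂(μH[(N : ℝ) - 1].restrict (frontier (Ω t))),
        -- (i) maximum dissipation principle ↔ (ii) Griffith's criterion
        ((IsGreatest {α : ℝ | α ∈ Set.Ico (0:ℝ) 1 ∧
            α * κ x = α * ((1 - α^2) / 2 * (Dn t x)^2)} (ω t x))
          ↔
          (0 ≤ ω t x ∧ ω t x < 1 ∧
            (1 - (ω t x)^2) / 2 * (Dn t x)^2 ≤ κ x ∧
            ω t x * ((1 - (ω t x)^2) / 2 * (Dn t x)^2 - κ x) = 0))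
        ∧
        -- (ii) Griffith's criterion ↔ (iii) explicit speed law
        ((0 ≤ ω t x ∧ ω t x < 1 ∧
            (1 - (ω t x)^2) / 2 * (Dn t x)^2 ≤ κ x ∧
            ω t x * ((1 - (ω t x)^2) / 2 * (Dn t x)^2 - κ x) = 0)
          ↔
          (ω t x = if (Dn t x)^2 > 2 * κ x
            then Real.sqrt (1 - 2 * κ x / (Dn t x)^2) else 0)) := by
  intro t ht
  refine Filter.Eventually.of_forall fun x => ?_
  have hg := aux_greatest (Dn t x) (κ x) (hκpos x)
  have hiff := aux_iff (Dn t x) (κ x) (ω t x) (hκpos x)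
  refine ⟨?_, hiff⟩
  rw [hiff]
  constructor
  · intro hw
    exact (hg.unique hw).symm
  · intro hw
    rw [hw]
    exact hg
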